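/- arXiv:1304.1773 — 3 statements merged into one kernel-verified Lean document; each statement's English description precedes it below -/
import Mathlib

section
/- Let λ be a real number, let I ⊆ ℝ be an interval, and let α : ℝ → ℝ be twice continuously differentiable on I and satisfy the barrier ODE α''(v)·(1 + λ²·α(v)²) + α(v)·(1 + λ²·α'(v)²) = 0 for all v ∈ I. Then the quantity Q(v) = (1 + λ²·α'(v)²)·(1 + λ²·α(v)²) is constant on I, and its constant value is ≥ 1. -/
/-- For a `C²` solution `α` of the barrier ODE
`α''·(1 + λ²α²) + α·(1 + λ²(α')²) = 0` on an interval `I`, the quantity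
`Q(v) = (1 + λ²·α'(v)²)·(1 + λ²·α(v)²)` is constant on `I`, with constant value `≥ 1`. -/
theorem barrier_ode_first_integral (lam : ℝ) (I : Set ℝ) (hI : I.OrdConnected)
    (α α' α'' : ℝ → ℝ)
    (hd1 : ∀ v ∈ I, HasDerivWithinAt α (α' v) I v)
    (hd2 : ∀ v ∈ I, HasDerivWithinAt α' (α'' v) I v)
    (hcont : ContinuousOn α'' I)
    (hode : ∀ v ∈ I,
      α'' v * (1 + lam ^ 2 * (α v) ^ 2) + α v * (1 + lam ^ 2 * (α' v) ^ 2) = 0) :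
    ∃ T : ℝ, 1 ≤ T ∧ ∀ v ∈ I,
      (1 + lam ^ 2 * (α' v) ^ 2) * (1 + lam ^ 2 * (α v) ^ 2) = T := by
  rcases I.eq_empty_or_nonempty with h | ⟨v₀, hv₀⟩
  · exact ⟨1, le_refl 1, by simp [h]⟩
  set Q : ℝ → ℝ := fun v => (1 + lam ^ 2 * (α' v) ^ 2) * (1 + lam ^ 2 * (α v) ^ 2) with hQ
  have hconv : Convex ℝ I := hI.convex
  have hQd : ∀ v ∈ I, HasDerivWithinAt Q 0 I v := by
    intro v hv
    have h1 := hd1 v hv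
    have h2 := hd2 v hv
    have : HasDerivWithinAt Q
        ((lam ^ 2 * (2 * α' v ^ 1 * α'' v)) * (1 + lam ^ 2 * (α v) ^ 2)
          + (1 + lam ^ 2 * (α' v) ^ 2) * (lam ^ 2 * (2 * α v ^ 1 * α' v))) I v := by
      exact (((h2.pow 2).const_mul (lam ^ 2)).const_add 1).mul
        (((h1.pow 2).const_mul (lam ^ 2)).const_add 1)
    have key : (lam ^ 2 * (2 * α' v ^ 1 * α'' v)) * (1 + lam ^ 2 * (α v) ^ 2)
          + (1 + lam ^ 2 * (α' v) ^ 2) * (lam ^ 2 * (2 * α v ^ 1 * α' v))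
        = 2 * lam ^ 2 * α' v *
          (α'' v * (1 + lam ^ 2 * (α v) ^ 2) + α v * (1 + lam ^ 2 * (α' v) ^ 2)) := by
      ring
    rw [key, hode v hv, mul_zero] at this
    exact this
  refine ⟨Q v₀, ?_, ?_⟩
  · have h1 : 1 ≤ 1 + lam ^ 2 * (α' v₀) ^ 2 := by nlinarith [sq_nonneg (lam * α' v₀)]
    have h2 : 1 ≤ 1 + lam ^ 2 * (α v₀) ^ 2 := by nlinarith [sq_nonneg (lam * α v₀)]
    simp only [hQ]
    nlinarith
  · intro v hv
    have := hconv.norm_image_sub_le_of_norm_hasDerivWithin_le (C := 0) hQd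
      (fun x _ => by simp) hv₀ hv
    simpa [sub_eq_zero] using this
end

section
/- Let λ > 0, M > 0 and T > 1 + λ²M² be real numbers, let v₁ > 0, and let α be a twice continuously differentiable function on [0, v₁] satisfying the barrier ODE α''·(1 + λ²α²) + α·(1 + λ²(α')²) = 0, with first integral (1 + λ²·α'(v)²)·(1 + λ²·α(v)²) = T constant on [0, v₁]. Suppose α(0) = 0, α'(v) ≥ 0 on [0, v₁], and 0 ≤ α(v) ≤ M on [0, v₁]. Then v₁ ≤ M·λ/√(T/(1 + λ²M²) − 1). Consequently, as T → ∞, the portion of the solution curve v ↦ (α(v), v) lying in the strip 0 ≤ α ≤ M converges to the vertical segment {0} × {0}. -/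
open Set

/-- Let `λ > 0`, `M > 0`, `T > 1 + λ²M²`, `v₁ > 0`, and let `α` be a `C²`
solution on `[0, v₁]` of the barrier ODE with first integral
`(1 + λ²(α')²)(1 + λ²α²) = T`, satisfying `α(0) = 0`, `α' ≥ 0` and `0 ≤ α ≤ M` on
`[0, v₁]`. Then `v₁ ≤ M·λ/√(T/(1 + λ²M²) − 1)`; hence as `T → ∞` the part of the solution
curve lying in the strip `0 ≤ α ≤ M` collapses onto the vertical segment at `v = 0`. -/
theorem barrier_ode_interval_length_bound (lam M T v₁ : ℝ) (hlam : 0 < lam) (hM : 0 < M)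
    (hT : 1 + lam ^ 2 * M ^ 2 < T) (hv₁ : 0 < v₁)
    (α α' α'' : ℝ → ℝ)
    (hd1 : ∀ v ∈ Icc 0 v₁, HasDerivWithinAt α (α' v) (Icc 0 v₁) v)
    (hd2 : ∀ v ∈ Icc 0 v₁, HasDerivWithinAt α' (α'' v) (Icc 0 v₁) v)
    (hcont : ContinuousOn α'' (Icc 0 v₁))
    (hode : ∀ v ∈ Icc 0 v₁,
      α'' v * (1 + lam ^ 2 * (α v) ^ 2) + α v * (1 + lam ^ 2 * (α' v) ^ 2) = 0)
    (hfirst : ∀ v ∈ Icc 0 v₁,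
      (1 + lam ^ 2 * (α' v) ^ 2) * (1 + lam ^ 2 * (α v) ^ 2) = T)
    (h0 : α 0 = 0)
    (hmono : ∀ v ∈ Icc 0 v₁, 0 ≤ α' v)
    (hrange : ∀ v ∈ Icc 0 v₁, 0 ≤ α v ∧ α v ≤ M) :
    v₁ ≤ M * lam / Real.sqrt (T / (1 + lam ^ 2 * M ^ 2) - 1) := by
  set s : ℝ := T / (1 + lam ^ 2 * M ^ 2) - 1 with hs
  have hden : (0:ℝ) < 1 + lam ^ 2 * M ^ 2 := by positivity
  have hspos : 0 < s := by
    rw [hs, sub_pos, lt_div_iff₀ hden]; linarith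
  have hsqrt : 0 < Real.sqrt s := Real.sqrt_pos.2 hspos
  set c : ℝ := Real.sqrt s / lam with hc
  have hcpos : 0 < c := div_pos hsqrt hlam
  have hge : ∀ v ∈ Icc (0:ℝ) v₁, c ≤ α' v := by
    intro v hv
    have h1 : (0:ℝ) ≤ α v := (hrange v hv).1
    have h2 : α v ≤ M := (hrange v hv).2
    have hA : 1 + lam ^ 2 * (α v) ^ 2 ≤ 1 + lam ^ 2 * M ^ 2 := by nlinarith [mul_le_mul_of_nonneg_left (by nlinarith : (α v)^2 ≤ M^2) (sq_nonneg lam)]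
    have hApos : (0:ℝ) < 1 + lam ^ 2 * (α v) ^ 2 := by positivity
    have hF := hfirst v hv
    have hT0 : 0 < T := lt_trans hden hT
    have key : s ≤ lam ^ 2 * (α' v) ^ 2 := by
      have hdiv : T / (1 + lam ^ 2 * M ^ 2) ≤ T / (1 + lam ^ 2 * (α v) ^ 2) :=
        div_le_div_of_nonneg_left hT0.le hApos hA
      have h3 : T / (1 + lam ^ 2 * (α v) ^ 2) = 1 + lam ^ 2 * (α' v) ^ 2 := by
        field_simp
        linarith [hF]
      rw [h3] at hdiv
      rw [hs]; linarith
    have h4 : c ^ 2 ≤ (α' v) ^ 2 := by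
      have hc2 : c ^ 2 = s / lam ^ 2 := by
        rw [hc, div_pow, Real.sq_sqrt hspos.le]
      rw [hc2, div_le_iff₀ (by positivity)]
      linarith [key]
    nlinarith [hmono v hv, hcpos]
  -- mean value inequality
  have hconv : Convex ℝ (Icc (0:ℝ) v₁) := convex_Icc 0 v₁
  have hcontα : ContinuousOn α (Icc 0 v₁) := fun v hv => (hd1 v hv).continuousWithinAt
  have hint : interior (Icc (0:ℝ) v₁) = Ioo 0 v₁ := interior_Icc
  have hderiv : ∀ x ∈ interior (Icc (0:ℝ) v₁), c ≤ deriv α x := by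
    intro x hx
    rw [hint] at hx
    have hmem : Icc (0:ℝ) v₁ ∈ nhds x := Icc_mem_nhds hx.1 hx.2
    have hda : HasDerivAt α (α' x) x :=
      (hd1 x (Ioo_subset_Icc_self hx)).hasDerivAt hmem
    rw [hda.deriv]
    exact hge x (Ioo_subset_Icc_self hx)
  have hdiff : DifferentiableOn ℝ α (interior (Icc (0:ℝ) v₁)) := by
    intro x hx
    rw [hint] at hx
    have hmem : Icc (0:ℝ) v₁ ∈ nhds x := Icc_mem_nhds hx.1 hx.2
    exact ((hd1 x (Ioo_subset_Icc_self hx)).hasDerivAt hmem).differentiableAt.differentiableWithinAt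
  have hmv := hconv.mul_sub_le_image_sub_of_le_deriv hcontα hdiff hderiv
    0 (left_mem_Icc.2 hv₁.le) v₁ (right_mem_Icc.2 hv₁.le) hv₁.le
  have hαv : α v₁ ≤ M := (hrange v₁ (right_mem_Icc.2 hv₁.le)).2
  have hcv : c * v₁ ≤ M := by
    rw [h0] at hmv; simpa using hmv.trans (by linarith)
  have : v₁ ≤ M / c := (le_div_iff₀ hcpos).2 (by linarith [hcv, mul_comm c v₁])
  calc v₁ ≤ M / c := this
    _ = M * lam / Real.sqrt s := by rw [hc]; field_simp
end

section
/- For every real λ > 0 and every real T > 1 there exist v₀ > 0 and a twice continuously differentiable function α : [0, v₀] → ℝ such that: α satisfies the barrier ODE α''·(1 + λ²α²) + α·(1 + λ²(α')²) = 0 on [0, v₀]; α(0) = 0 and α(v₀) = 0; α'(0) = √(T − 1)/λ; α(v) > 0 for all v ∈ (0, v₀); the first integral (1 + λ²(α')²)(1 + λ²α²) equals T identically on [0, v₀]; and the maximum value of α on [0, v₀] equals √(T − 1)/λ. -/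
open Set

noncomputable section BarrierAux

/-- The integrand `√(1 + K sin² s)`. -/
def barrierF (K : ℝ) (s : ℝ) : ℝ := Real.sqrt (1 + K * Real.sin s ^ 2)

/-- The arclength-type reparametrization `θ ↦ ∫₀^θ √(1 + K sin² s) ds`. -/
def barrierG (K : ℝ) (θ : ℝ) : ℝ := ∫ s in (0:ℝ)..θ, barrierF K s

variable {K : ℝ} (hK : 0 ≤ K)

lemma barrierD_one_le (hK : 0 ≤ K) (x : ℝ) : (1:ℝ) ≤ 1 + K * Real.sin x ^ 2 := by
  nlinarith [sq_nonneg (Real.sin x)]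

lemma barrierF_one_le (hK : 0 ≤ K) (x : ℝ) : (1:ℝ) ≤ barrierF K x := by
  have h := Real.sqrt_le_sqrt (barrierD_one_le hK x)
  rwa [Real.sqrt_one] at h

lemma barrierF_pos (hK : 0 ≤ K) (x : ℝ) : (0:ℝ) < barrierF K x :=
  lt_of_lt_of_le one_pos (barrierF_one_le hK x)

lemma barrierF_cont (K : ℝ) : Continuous (barrierF K) := by
  unfold barrierF; fun_prop

lemma barrierG_hasDerivAt (K : ℝ) (b : ℝ) :
    HasDerivAt (barrierG K) (barrierF K b) b :=
  ((barrierF_cont K).integral_hasStrictDerivAt 0 b).hasDerivAt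

lemma barrierG_cont (K : ℝ) : Continuous (barrierG K) :=
  continuous_iff_continuousAt.2 fun x => (barrierG_hasDerivAt K x).continuousAt

lemma barrierG_strictMono (hK : 0 ≤ K) : StrictMono (barrierG K) :=
  strictMono_of_deriv_pos fun x => by
    rw [(barrierG_hasDerivAt K x).deriv]; exact barrierF_pos hK x

lemma barrierG_ge (hK : 0 ≤ K) {θ : ℝ} (hθ : 0 ≤ θ) : θ ≤ barrierG K θ := by
  have h : ∫ s in (0:ℝ)..θ, (1:ℝ) ≤ ∫ s in (0:ℝ)..θ, barrierF K s := by
    apply intervalIntegral.integral_mono_on hθ (intervalIntegrable_const)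
      ((barrierF_cont K).intervalIntegrable 0 θ)
    intro x _; exact barrierF_one_le hK x
  simpa [barrierG] using h

lemma barrierG_le (hK : 0 ≤ K) {θ : ℝ} (hθ : θ ≤ 0) : barrierG K θ ≤ θ := by
  have h : ∫ s in θ..(0:ℝ), (1:ℝ) ≤ ∫ s in θ..(0:ℝ), barrierF K s := by
    apply intervalIntegral.integral_mono_on hθ (intervalIntegrable_const)
      ((barrierF_cont K).intervalIntegrable θ 0)
    intro x _; exact barrierF_one_le hK x
  have h2 : barrierG K θ = -∫ s in θ..(0:ℝ), barrierF K s := by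
    rw [barrierG, intervalIntegral.integral_symm]
  simp only [intervalIntegral.integral_const, smul_eq_mul, mul_one] at h
  rw [h2]; linarith

lemma barrierG_surjective (hK : 0 ≤ K) : Function.Surjective (barrierG K) := by
  apply (barrierG_cont K).surjective
  · exact Filter.tendsto_atTop_mono' _ ((Filter.eventually_ge_atTop 0).mono
      fun θ hθ => barrierG_ge hK hθ) Filter.tendsto_id
  · exact Filter.tendsto_atBot_mono' _ ((Filter.eventually_le_atBot (0:ℝ)).mono
      fun θ hθ => barrierG_le hK hθ) Filter.tendsto_id

end BarrierAux

/-- For every `λ > 0` and `T > 1` there exist `v₀ > 0` and a `C²`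
function `α` on `[0, v₀]` solving the barrier ODE, with `α(0) = α(v₀) = 0`,
`α'(0) = √(T − 1)/λ`, `α > 0` on `(0, v₀)`, first integral identically equal to `T`,
and maximum value `√(T − 1)/λ` on `[0, v₀]`. -/
theorem barrier_ode_existence (lam T : ℝ) (hlam : 0 < lam) (hT : 1 < T) :
    ∃ (v₀ : ℝ) (α α' α'' : ℝ → ℝ), 0 < v₀ ∧
      (∀ v ∈ Icc 0 v₀, HasDerivWithinAt α (α' v) (Icc 0 v₀) v) ∧
      (∀ v ∈ Icc 0 v₀, HasDerivWithinAt α' (α'' v) (Icc 0 v₀) v) ∧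
      ContinuousOn α'' (Icc 0 v₀) ∧
      (∀ v ∈ Icc 0 v₀,
        α'' v * (1 + lam ^ 2 * (α v) ^ 2) + α v * (1 + lam ^ 2 * (α' v) ^ 2) = 0) ∧
      α 0 = 0 ∧ α v₀ = 0 ∧
      α' 0 = Real.sqrt (T - 1) / lam ∧
      (∀ v ∈ Ioo 0 v₀, 0 < α v) ∧
      (∀ v ∈ Icc 0 v₀,
        (1 + lam ^ 2 * (α' v) ^ 2) * (1 + lam ^ 2 * (α v) ^ 2) = T) ∧
      IsGreatest (α '' Icc 0 v₀) (Real.sqrt (T - 1) / lam) := by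
  have hT0 : (0:ℝ) ≤ T - 1 := by linarith
  set K : ℝ := T - 1 with hKdef
  have hK : (0:ℝ) ≤ K := hT0
  have hTK : T = K + 1 := by rw [hKdef]; ring
  set A : ℝ := Real.sqrt (T - 1) / lam with hAdef
  have hA0 : 0 < A := div_pos (Real.sqrt_pos.2 (by linarith)) hlam
  have hA2 : lam ^ 2 * A ^ 2 = K := by
    rw [hAdef, div_pow, Real.sq_sqrt hT0]
    field_simp
  set e : ℝ ≃o ℝ :=
    StrictMono.orderIsoOfSurjective _ (barrierG_strictMono hK) (barrierG_surjective hK)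
    with hedef
  set f : ℝ → ℝ := fun y => e.symm y with hfdef
  have hfg : ∀ y, barrierG K (f y) = y := fun y => e.apply_symm_apply y
  have hgf : ∀ x, f (barrierG K x) = x := fun x => e.symm_apply_apply x
  have hfc : Continuous f := e.symm.continuous
  have hfmono : StrictMono f := e.symm.strictMono
  have hg0 : barrierG K 0 = 0 := by simp [barrierG]
  have hf0 : f 0 = 0 := by have := hgf 0; rwa [hg0] at this
  set v₀ : ℝ := barrierG K Real.pi with hv0def
  have hv0pos : 0 < v₀ := by
    have := barrierG_strictMono hK (Real.pi_pos)
    rwa [hg0] at this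
  have hfv0 : f v₀ = Real.pi := hgf Real.pi
  have hfd : ∀ v, HasDerivAt f (barrierF K (f v))⁻¹ v := fun v =>
    HasDerivAt.of_local_left_inverse hfc.continuousAt (barrierG_hasDerivAt K (f v))
      (ne_of_gt (barrierF_pos hK (f v))) (Filter.Eventually.of_forall hfg)
  -- abbreviations
  have hDpos : ∀ v : ℝ, (0:ℝ) < 1 + K * Real.sin (f v) ^ 2 :=
    fun v => lt_of_lt_of_le one_pos (barrierD_one_le hK (f v))
  have hq2 : ∀ v : ℝ, Real.sqrt (1 + K * Real.sin (f v) ^ 2) ^ 2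
      = 1 + K * Real.sin (f v) ^ 2 := fun v => Real.sq_sqrt (hDpos v).le
  have hqpos : ∀ v : ℝ, (0:ℝ) < Real.sqrt (1 + K * Real.sin (f v) ^ 2) :=
    fun v => Real.sqrt_pos.2 (hDpos v)
  have hc2 : ∀ v : ℝ, Real.cos (f v) ^ 2 = 1 - Real.sin (f v) ^ 2 := fun v => by
    have := Real.sin_sq_add_cos_sq (f v); linarith
  have hbF : ∀ v : ℝ, barrierF K (f v) = Real.sqrt (1 + K * Real.sin (f v) ^ 2) :=
    fun v => rfl
  have hsub1 : ∀ v : ℝ, lam ^ 2 * (A * Real.sin (f v)) ^ 2 = K * Real.sin (f v) ^ 2 := by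
    intro v
    have h : lam ^ 2 * (A * Real.sin (f v)) ^ 2
        = lam ^ 2 * A ^ 2 * Real.sin (f v) ^ 2 := by ring
    rw [h, hA2]
  have hsub2 : ∀ v : ℝ, lam ^ 2 *
      (A * Real.cos (f v) * (Real.sqrt (1 + K * Real.sin (f v) ^ 2))⁻¹) ^ 2
      = K * Real.cos (f v) ^ 2 / (1 + K * Real.sin (f v) ^ 2) := by
    intro v
    have h : lam ^ 2 * (A * Real.cos (f v) * (Real.sqrt (1 + K * Real.sin (f v) ^ 2))⁻¹) ^ 2
        = lam ^ 2 * A ^ 2 * Real.cos (f v) ^ 2 *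
          ((Real.sqrt (1 + K * Real.sin (f v) ^ 2)) ^ 2)⁻¹ := by
      rw [mul_pow, mul_pow, inv_pow]; ring
    rw [h, hA2, hq2 v, div_eq_mul_inv]
  -- first derivative
  have hαd : ∀ v : ℝ, HasDerivAt (fun w => A * Real.sin (f w))
      (A * Real.cos (f v) * (Real.sqrt (1 + K * Real.sin (f v) ^ 2))⁻¹) v := by
    intro v
    have h := ((Real.hasDerivAt_sin (f v)).comp v (hfd v)).const_mul A
    refine h.congr_deriv ?_
    rw [hbF]; ring
  -- second derivative
  have hα'd : ∀ v : ℝ, HasDerivAt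
      (fun w => A * Real.cos (f w) * (Real.sqrt (1 + K * Real.sin (f w) ^ 2))⁻¹)
      (-(A * T * Real.sin (f v)) / (1 + K * Real.sin (f v) ^ 2) ^ 2) v := by
    intro v
    have h1 : HasDerivAt (fun w => Real.sin (f w))
        (Real.cos (f v) * (barrierF K (f v))⁻¹) v :=
      (Real.hasDerivAt_sin (f v)).comp v (hfd v)
    have h2 : HasDerivAt (fun w => Real.cos (f w))
        (-Real.sin (f v) * (barrierF K (f v))⁻¹) v := by
      exact (Real.hasDerivAt_cos (f v)).comp v (hfd v)
    have h3 : HasDerivAt (fun w => 1 + K * Real.sin (f w) ^ 2)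
        (K * (2 * Real.sin (f v) * (Real.cos (f v) * (barrierF K (f v))⁻¹))) v := by
      have h := ((h1.pow 2).const_mul K).const_add 1
      refine h.congr_deriv ?_
      push_cast; ring
    have hDne : (1 + K * Real.sin (f v) ^ 2) ≠ 0 := (hDpos v).ne'
    have h4 : HasDerivAt (fun w => Real.sqrt (1 + K * Real.sin (f w) ^ 2))
        (1 / (2 * Real.sqrt (1 + K * Real.sin (f v) ^ 2)) *
          (K * (2 * Real.sin (f v) * (Real.cos (f v) * (barrierF K (f v))⁻¹)))) v := by
      have h := (Real.hasDerivAt_sqrt hDne).comp v h3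
      exact h
    have h5 : HasDerivAt (fun w => (Real.sqrt (1 + K * Real.sin (f w) ^ 2))⁻¹)
        (-(1 / (2 * Real.sqrt (1 + K * Real.sin (f v) ^ 2)) *
            (K * (2 * Real.sin (f v) * (Real.cos (f v) * (barrierF K (f v))⁻¹)))) /
          (Real.sqrt (1 + K * Real.sin (f v) ^ 2)) ^ 2) v := by
      exact h4.inv (hqpos v).ne'
    have h6 := (h2.const_mul A).mul h5
    refine h6.congr_deriv ?_
    rw [hbF]
    have hq2v := hq2 v
    have hqne := (hqpos v).ne'
    set q : ℝ := Real.sqrt (1 + K * Real.sin (f v) ^ 2) with hqdef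
    rw [← hq2v]
    field_simp
    linear_combination (Real.sin (f v)) * hTK +
      (-Real.sin (f v)) * hq2v + (-K*Real.sin (f v)) * hc2 v
  refine ⟨v₀, fun v => A * Real.sin (f v),
    fun v => A * Real.cos (f v) * (Real.sqrt (1 + K * Real.sin (f v) ^ 2))⁻¹,
    fun v => -(A * T * Real.sin (f v)) / (1 + K * Real.sin (f v) ^ 2) ^ 2,
    hv0pos, ?_, ?_, ?_, ?_, ?_, ?_, ?_, ?_, ?_, ?_⟩
  · exact fun v _ => (hαd v).hasDerivWithinAt
  · exact fun v _ => (hα'd v).hasDerivWithinAt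
  · apply Continuous.continuousOn
    apply Continuous.div
    · fun_prop
    · fun_prop
    · exact fun v => pow_ne_zero 2 (hDpos v).ne'
  · intro v _
    have hDne := (hDpos v).ne'
    rw [hsub1 v, hsub2 v, hTK, hc2 v]
    field_simp
    ring
  · simp [hf0]
  · show A * Real.sin (f v₀) = 0
    rw [hfv0, Real.sin_pi]; ring
  · show A * Real.cos (f 0) * (Real.sqrt (1 + K * Real.sin (f 0) ^ 2))⁻¹
      = Real.sqrt (T - 1) / lam
    rw [hf0]
    simp
    exact hAdef
  · intro v hv
    have h1 : f 0 < f v := hfmono hv.1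
    have h2 : f v < f v₀ := hfmono hv.2
    rw [hf0] at h1; rw [hfv0] at h2
    exact mul_pos hA0 (Real.sin_pos_of_pos_of_lt_pi h1 h2)
  · intro v _
    have hDne := (hDpos v).ne'
    rw [hsub1 v, hsub2 v, hTK, hc2 v]
    field_simp
    ring
  · constructor
    · refine ⟨barrierG K (Real.pi / 2), ⟨?_, ?_⟩, ?_⟩
      · rw [← hg0]
        exact (barrierG_strictMono hK).monotone (by positivity)
      · exact (barrierG_strictMono hK).monotone (by linarith [Real.pi_pos])
      · show A * Real.sin (f (barrierG K (Real.pi / 2))) = Real.sqrt (T - 1) / lam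
        rw [hgf, Real.sin_pi_div_two, mul_one]
    · rintro y ⟨v, _, rfl⟩
      calc A * Real.sin (f v) ≤ A * 1 := by
            have := Real.sin_le_one (f v); nlinarith
        _ = A := mul_one A
end
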